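/- Let a = (2-√2)/4 and ψ_a(z) = ((1/6)(-6a³+18a²-9a+1)z³ + (1/2)(6a²-6a+1)z² + (1-3a)z + 1)/(1-az)³. Then ψ_a(-2-√8) = 1 - 2√2/3 > 0, and for every integer k ≥ 1, ψ_a^{(k)}(-2-√8) = (4/3)·(3/2 - √2)^k · k!·(k-1)(k-2) ≥ 0. In particular ψ_a is absolutely monotonic at -2-2√2. -/

import Mathlib

/-- Auxiliary family: the `k`-th derivative of `ψ_a` (plus its constant part at `k = 0`),
written in terms of `a` alone (using `√2 = 2 - 4a`). -/
noncomputable def psiAuxE (a : ℝ) (k : ℕ) (z : ℝ) : ℝ :=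
  (if k = 0 then (-3 + 8 / 3 * a) else 0) +
    (16 - 16 * a) * (k.factorial : ℝ) * a ^ k * ((1 - a * z)⁻¹) ^ (k + 1) +
    (-28 + 32 * a) * ((k + 1).factorial : ℝ) * a ^ k * ((1 - a * z)⁻¹) ^ (k + 2) +
    ((16 - 56 / 3 * a) / 2) * ((k + 2).factorial : ℝ) * a ^ k * ((1 - a * z)⁻¹) ^ (k + 3)

lemma psiAuxE_hasDerivAt (a : ℝ) (k : ℕ) (z : ℝ) (hz : 1 - a * z ≠ 0) :
    HasDerivAt (psiAuxE a k) (psiAuxE a (k + 1) z) z := by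
  have hu : HasDerivAt (fun z : ℝ => 1 - a * z) (-a) z := by
    simpa using ((hasDerivAt_id z).const_mul a).const_sub 1
  have hv : HasDerivAt (fun z : ℝ => (1 - a * z)⁻¹) (a / (1 - a * z) ^ 2) z := by
    have := hu.inv hz
    exact (by simpa using this : HasDerivAt (fun z : ℝ => 1 - a * z)⁻¹ (a / (1 - a * z) ^ 2) z)
  have h1 := (hv.pow (k + 1)).const_mul ((16 - 16 * a) * (k.factorial : ℝ) * a ^ k)
  have h2 := (hv.pow (k + 2)).const_mul ((-28 + 32 * a) * ((k + 1).factorial : ℝ) * a ^ k)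
  have h3 := (hv.pow (k + 3)).const_mul (((16 - 56 / 3 * a) / 2) * ((k + 2).factorial : ℝ) * a ^ k)
  have h0 : HasDerivAt (fun _ : ℝ => (if k = 0 then (-3 + 8 / 3 * a) else 0)) 0 z :=
    hasDerivAt_const _ _
  have H := ((h0.add h1).add h2).add h3
  have hfun : psiAuxE a k = fun z : ℝ =>
      (if k = 0 then (-3 + 8 / 3 * a) else 0) +
        (16 - 16 * a) * (k.factorial : ℝ) * a ^ k * ((1 - a * z)⁻¹) ^ (k + 1) +
        (-28 + 32 * a) * ((k + 1).factorial : ℝ) * a ^ k * ((1 - a * z)⁻¹) ^ (k + 2) +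
        ((16 - 56 / 3 * a) / 2) * ((k + 2).factorial : ℝ) * a ^ k * ((1 - a * z)⁻¹) ^ (k + 3) := rfl
  rw [hfun]
  refine H.congr_deriv ?_
  simp only [psiAuxE, Nat.add_sub_cancel, if_neg (Nat.succ_ne_zero k)]
  push_cast [Nat.factorial_succ]
  simp only [div_eq_mul_inv, ← inv_pow]
  ring

/-- For `a = (2-√2)/4` and
`ψ_a(z) = ((1/6)(-6a³+18a²-9a+1)z³ + (1/2)(6a²-6a+1)z² + (1-3a)z + 1)/(1-az)³`:
`ψ_a(-2-√8) = 1 - 2√2/3 > 0` and for every `k ≥ 1`,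
`ψ_a^{(k)}(-2-√8) = (4/3)(3/2-√2)^k k! (k-1)(k-2) ≥ 0`; in particular `ψ_a`
is absolutely monotonic at `-2-2√2`. -/
theorem psi_333_at_optimal_point :
    let a : ℝ := (2 - Real.sqrt 2) / 4
    let ψ : ℝ → ℝ := fun z =>
      ((1 / 6) * (-6 * a ^ 3 + 18 * a ^ 2 - 9 * a + 1) * z ^ 3 +
          (1 / 2) * (6 * a ^ 2 - 6 * a + 1) * z ^ 2 + (1 - 3 * a) * z + 1) /
        (1 - a * z) ^ 3
    (ψ (-2 - Real.sqrt 8) = 1 - 2 * Real.sqrt 2 / 3) ∧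
    (0 < 1 - 2 * Real.sqrt 2 / 3) ∧
    (∀ k : ℕ, 1 ≤ k →
      iteratedDeriv k ψ (-2 - Real.sqrt 8) =
        (4 / 3) * (3 / 2 - Real.sqrt 2) ^ k * (k.factorial : ℝ) *
          ((k : ℝ) - 1) * ((k : ℝ) - 2)) ∧
    (∀ k : ℕ, 0 ≤ iteratedDeriv k ψ (-2 - Real.sqrt 8)) := by
  intro a ψ
  have ha : a = (2 - Real.sqrt 2) / 4 := rfl
  have hψdef : ψ = fun z =>
      ((1 / 6) * (-6 * a ^ 3 + 18 * a ^ 2 - 9 * a + 1) * z ^ 3 +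
          (1 / 2) * (6 * a ^ 2 - 6 * a + 1) * z ^ 2 + (1 - 3 * a) * z + 1) /
        (1 - a * z) ^ 3 := rfl
  clear_value ψ
  clear_value a
  have hs : Real.sqrt 2 ^ 2 = 2 := Real.sq_sqrt (by norm_num)
  have hsnn : (0 : ℝ) ≤ Real.sqrt 2 := Real.sqrt_nonneg 2
  have hslt : Real.sqrt 2 < 3 / 2 := by nlinarith [sq_nonneg (Real.sqrt 2 - 3 / 2)]
  have ha2 : 16 * a ^ 2 = 16 * a - 2 := by rw [ha]; linear_combination hs
  have hs24 : Real.sqrt 2 = 2 - 4 * a := by rw [ha]; ring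
  have hs8 : Real.sqrt 8 = 2 * Real.sqrt 2 := by
    rw [show (8 : ℝ) = 2 ^ 2 * 2 by norm_num, Real.sqrt_mul (by positivity),
      Real.sqrt_sq (by norm_num : (0:ℝ) ≤ 2)]
  set x : ℝ := -2 - Real.sqrt 8 with hxdef
  have hx : x = -6 + 8 * a := by rw [hxdef, hs8, hs24]; ring
  have hux : 1 - a * x = 2 - 2 * a := by
    rw [hx]; linear_combination (-(1:ℝ)/2) * ha2
  have huxpos : (0 : ℝ) < 1 - a * x := by
    rw [hux]; nlinarith [sq_nonneg a, sq_nonneg (a - 1)]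
  have huxne : 1 - a * x ≠ 0 := ne_of_gt huxpos
  have hvx : (1 - a * x)⁻¹ = 4 * a := by
    rw [hux]
    refine inv_eq_of_mul_eq_one_right ?_
    linear_combination (-(1:ℝ)/2) * ha2
  -- ψ agrees with psiAuxE a 0 wherever 1 - a z ≠ 0
  have hψE : ∀ z : ℝ, 1 - a * z ≠ 0 → ψ z = psiAuxE a 0 z := by
    intro z hz
    have hnum : (1 / 6) * (-6 * a ^ 3 + 18 * a ^ 2 - 9 * a + 1) * z ^ 3 +
        (1 / 2) * (6 * a ^ 2 - 6 * a + 1) * z ^ 2 + (1 - 3 * a) * z + 1 =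
        (-3 + 8 / 3 * a) * (1 - a * z) ^ 3 + (16 - 16 * a) * (1 - a * z) ^ 2 +
          (-28 + 32 * a) * (1 - a * z) + (16 - 56 / 3 * a) := by
      linear_combination ((1/2) * z + (1/4) * z ^ 2 + (1/12) * z ^ 3 + (1/2) * a * z ^ 2
        + (-1/12) * a * z ^ 3 + (1/6) * a ^ 2 * z ^ 3) * ha2
    rw [hψdef]
    simp only
    rw [hnum]
    simp only [psiAuxE, pow_zero, Nat.factorial]
    push_cast
    field_simp
  -- eventually, 1 - a z ≠ 0 near x
  have hmem : ∀ᶠ z in nhds x, 1 - a * z ≠ 0 := by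
    have hc : ContinuousAt (fun z : ℝ => 1 - a * z) x :=
      (continuous_const.sub (continuous_const.mul continuous_id)).continuousAt
    exact hc.eventually_ne huxne
  -- the key induction
  have main : ∀ k : ℕ, iteratedDeriv k ψ =ᶠ[nhds x] psiAuxE a k := by
    intro k
    induction k with
    | zero =>
        rw [iteratedDeriv_zero]; exact hmem.mono fun z hz => hψE z hz
    | succ k ih =>
        have h1 : deriv (iteratedDeriv k ψ) =ᶠ[nhds x] deriv (psiAuxE a k) := ih.deriv
        have h2 : deriv (psiAuxE a k) =ᶠ[nhds x] psiAuxE a (k + 1) :=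
          hmem.mono fun z hz => (psiAuxE_hasDerivAt a k z hz).deriv
        simpa [iteratedDeriv_succ] using h1.trans h2
  have hval : ∀ k : ℕ, iteratedDeriv k ψ x = psiAuxE a k x := fun k => (main k).eq_of_nhds
  -- value of ψ at x
  have hψx : ψ x = 1 - 2 * Real.sqrt 2 / 3 := by
    have h0 := hval 0
    rw [iteratedDeriv_zero] at h0
    rw [h0]
    simp only [psiAuxE, hvx, pow_zero, Nat.factorial]
    push_cast
    rw [hs24]
    linear_combination ((-4:ℝ)/3 + 64/3 * a + -224/3 * a ^ 2) * ha2
  have hψxpos : (0:ℝ) < 1 - 2 * Real.sqrt 2 / 3 := by nlinarith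
  -- derivative formula for k ≥ 1
  have hder : ∀ k : ℕ, 1 ≤ k →
      iteratedDeriv k ψ x =
        (4 / 3) * (3 / 2 - Real.sqrt 2) ^ k * (k.factorial : ℝ) *
          ((k : ℝ) - 1) * ((k : ℝ) - 2) := by
    intro k hk
    obtain ⟨m, rfl⟩ : ∃ m, k = m + 1 := ⟨k - 1, (Nat.succ_pred_eq_of_pos hk).symm⟩
    rw [hval, psiAuxE, hvx, if_neg (Nat.succ_ne_zero m)]
    have hr : (3 / 2 - Real.sqrt 2 : ℝ) = a * (4 * a) := by
      rw [hs24]; linear_combination (-(1:ℝ)/4) * ha2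
    rw [hr]
    push_cast [Nat.factorial_succ]
    linear_combination (a ^ (m + 1) * (4 * a) ^ (m + 1) * (m.factorial : ℝ) *
      ((2/3) * (m:ℝ) + (-2/3) * (m:ℝ) ^ 3 + 32 * a + (112/3) * a * (m:ℝ)
        + (-16/3) * a * (m:ℝ) ^ 3 + (-224) * a ^ 2 + (-1232/3) * a ^ 2 * (m:ℝ)
        + (-224) * a ^ 2 * (m:ℝ) ^ 2 + (-112/3) * a ^ 2 * (m:ℝ) ^ 3)) * ha2
  refine ⟨hψx, hψxpos, hder, ?_⟩
  intro k
  rcases Nat.eq_zero_or_pos k with hk | hk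
  · subst hk
    rw [iteratedDeriv_zero, hψx]
    exact hψxpos.le
  · rw [hder k hk]
    have hrnn : (0:ℝ) ≤ 3 / 2 - Real.sqrt 2 := by linarith
    match k, hk with
    | 1, _ => norm_num
    | 2, _ => norm_num
    | (m + 3), _ =>
      have h1 : (0:ℝ) ≤ ((m + 3 : ℕ) : ℝ) - 1 := by
        push_cast; linarith [Nat.cast_nonneg (α := ℝ) m]
      have h2 : (0:ℝ) ≤ ((m + 3 : ℕ) : ℝ) - 2 := by
        push_cast; linarith [Nat.cast_nonneg (α := ℝ) m]
      have hf : (0:ℝ) ≤ ((m + 3).factorial : ℝ) := Nat.cast_nonneg _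
      have hp : (0:ℝ) ≤ (3 / 2 - Real.sqrt 2) ^ (m + 3) := pow_nonneg hrnn _
      have := mul_nonneg (mul_nonneg (mul_nonneg (mul_nonneg
        (by norm_num : (0:ℝ) ≤ 4/3) hp) hf) h1) h2
      exact this
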